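/- Let p be a prime, α ≥ 1 and β ∈ ℕ. For every function f : ZMod(p^α) → ℤ and every x ∈ ZMod(p^α), the prime power p^β divides Δ^{(β(p−1)+1)·p^{α−1}} f(x). -/

import Mathlib

/-- The discrete derivative (difference operator) `Δf(x) = f(x+1) − f(x)`. -/
def discDeriv {G M : Type*} [Add G] [One G] [Sub M] (f : G → M) : G → M :=
  fun x => f (x + 1) - f x

open Finset

section RingLemmas

variable {R : Type*} [CommRing R] {p : ℕ}

/-- `(-1)^(m + (p-1)) * C(p-1, m) ≡ 1 mod p`. -/
lemma choose_sign_zmod (hp : p.Prime) :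
    ∀ m, m ≤ p - 1 → (((-1 : ℤ) ^ (m + (p - 1)) * ((p - 1).choose m) : ℤ) : ZMod p) = 1 := by
  intro m
  induction m with
  | zero =>
    intro _
    rcases hp.eq_two_or_odd' with h2 | hodd
    · subst h2; decide
    · have he : Even (p - 1) := Nat.Odd.sub_odd hodd odd_one
      push_cast
      rw [Nat.choose_zero_right, zero_add]
      simp [he.neg_one_pow]
  | succ m ih =>
    intro hm
    have hm' : m ≤ p - 1 := Nat.le_of_succ_le hm
    have ihv := ih hm'
    have hps : p - 1 + 1 = p := Nat.succ_pred_eq_of_pos hp.pos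
    have hchoose : ((p - 1).choose m + (p - 1).choose (m + 1)) = p.choose (m + 1) := by
      have := Nat.choose_succ_succ (p - 1) (m)
      rw [Nat.succ_eq_add_one, hps] at this
      simpa using this.symm
    have hdvd : p ∣ p.choose (m + 1) :=
      hp.dvd_choose_self (Nat.succ_ne_zero m) (by omega)
    have hz : (((p - 1).choose (m + 1) : ℤ) : ZMod p) = -(((p - 1).choose m : ℤ) : ZMod p) := by
      have : ((p.choose (m + 1) : ℤ) : ZMod p) = 0 := by
        rw [ZMod.intCast_zmod_eq_zero_iff_dvd]
        exact_mod_cast hdvd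
      rw [← hchoose] at this
      push_cast at this ⊢
      linear_combination this
    push_cast at ihv hz ⊢
    rw [show m + 1 + (p - 1) = (m + (p-1)) + 1 by omega, pow_succ]
    rw [hz]
    linear_combination ihv

/-- `(u-1)^(p-1) ≡ 1 + u + ... + u^(p-1) mod p`. -/
lemma sub_one_pow_sub_geom (hp : p.Prime) (u : R) :
    (p : R) ∣ (u - 1) ^ (p - 1) - ∑ i ∈ range p, u ^ i := by
  have hps : p - 1 + 1 = p := Nat.succ_pred_eq_of_pos hp.pos
  rw [sub_pow u 1 (p - 1), hps, ← Finset.sum_sub_distrib]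
  apply Finset.dvd_sum
  intro m hm
  rw [mem_range] at hm
  have key : (p : ℤ) ∣ (-1 : ℤ) ^ (m + (p - 1)) * ((p - 1).choose m) - 1 := by
    rw [← ZMod.intCast_zmod_eq_zero_iff_dvd]
    push_cast
    rw [sub_eq_zero]
    have := choose_sign_zmod hp m (by omega)
    push_cast at this
    exact this
  have key2 : (p : R) ∣ (((-1 : ℤ) ^ (m + (p - 1)) * ((p - 1).choose m) - 1 : ℤ) : R) := by
    obtain ⟨c, hc⟩ := key
    exact ⟨(c : R), by exact_mod_cast congrArg (Int.cast : ℤ → R) hc⟩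
  obtain ⟨c, hc⟩ := key2
  refine ⟨c * u ^ m, ?_⟩
  have : ((-1 : R) ^ (m + (p - 1)) * ((p - 1).choose m) - 1) = (p : R) * c := by
    push_cast at hc ⊢
    linear_combination hc
  calc (-1) ^ (m + (p-1)) * u ^ m * 1 ^ (p - 1 - m) * ((p - 1).choose m) - u ^ m
      = ((-1 : R) ^ (m + (p - 1)) * ((p - 1).choose m) - 1) * u ^ m := by ring
    _ = (p : R) * (c * u ^ m) := by rw [this]; ring

/-- Key lemma at level α = 1: if `u^p = 1` then `p^γ ∣ (u-1)^(γ(p-1)+1)`. -/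
lemma pow_dvd_sub_one_pow (hp : p.Prime) (u : R) (hu : u ^ p = 1) :
    ∀ γ : ℕ, (p : R) ^ γ ∣ (u - 1) ^ (γ * (p - 1) + 1) := by
  intro γ
  induction γ with
  | zero => simp
  | succ γ ih =>
    obtain ⟨e, he⟩ := sub_one_pow_sub_geom hp u
    have hA : (∑ i ∈ range p, u ^ i) * (u - 1) = 0 := by
      rw [geom_sum_mul, hu, sub_self]
    have hexp : (γ + 1) * (p - 1) + 1 = (p - 1) + (γ * (p - 1) + 1) := by ring
    have hfac : (u - 1) ^ (γ * (p - 1) + 1) = (u - 1) * (u - 1) ^ (γ * (p - 1)) := by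
      rw [pow_succ']
    have key : (u - 1) ^ ((γ + 1) * (p - 1) + 1)
        = (p : R) * (e * (u - 1) ^ (γ * (p - 1) + 1)) := by
      rw [hexp, pow_add]
      have h1 : (u - 1) ^ (p - 1) = (∑ i ∈ range p, u ^ i) + (p : R) * e := by
        linear_combination he
      rw [h1, add_mul, hfac, ← mul_assoc, hA, zero_mul, zero_add]
      ring
    rw [key, pow_succ]
    obtain ⟨t, ht⟩ := ih
    exact ⟨e * t, by rw [ht]; ring⟩

/-- Freshman's dream modulo p for `(v-1)^(p^k)`. -/
lemma freshman (hp : p.Prime) (v : R) :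
    ∀ k : ℕ, (p : R) ∣ (v - 1) ^ (p ^ k) - (v ^ (p ^ k) - 1) := by
  intro k
  induction k with
  | zero => simp
  | succ k ih =>
    obtain ⟨t, ht⟩ := ih
    set w := v ^ (p ^ k) with hw
    have h1 : (v - 1) ^ (p ^ k) = (w - 1) + (p : R) * t := by linear_combination ht
    have h2 : (v - 1) ^ (p ^ (k + 1)) = ((w - 1) + (p : R) * t) ^ p := by
      rw [pow_succ, pow_mul, h1]
    -- p ∣ ((w-1) + p t)^p - (w-1)^p
    have h3 : (p : R) ∣ ((w - 1) + (p : R) * t) ^ p - (w - 1) ^ p := by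
      have := sub_dvd_pow_sub_pow ((w - 1) + (p : R) * t) (w - 1) p
      simp only [add_sub_cancel_left] at this
      exact dvd_trans (Dvd.intro t rfl) this
    -- p ∣ (w-1)^p - (w^p - 1)
    have h4 : (p : R) ∣ (w - 1) ^ p - (w ^ p - 1) := by
      obtain ⟨r, hr⟩ : ∃ r, (w + -1 : R) ^ p = w ^ p + (-1) ^ p + p * r := by
        obtain ⟨r, hr⟩ := exists_add_pow_prime_eq hp w (-1 : R)
        exact ⟨w * -1 * r, by rw [hr]; ring⟩
      have hsgn : (p : R) ∣ (-1 : R) ^ p + 1 := by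
        rcases hp.eq_two_or_odd' with h2 | hodd
        · subst h2; norm_num
        · rw [hodd.neg_one_pow]; simp
      obtain ⟨s, hs⟩ := hsgn
      refine ⟨s + r, ?_⟩
      have : (w - 1) ^ p = w ^ p + (-1 : R) ^ p + (p : R) * r := by
        rw [← hr]; ring_nf
      rw [this]
      linear_combination hs
    have h5 : v ^ (p ^ (k + 1)) = w ^ p := by rw [hw, ← pow_mul, pow_succ]
    rw [h2, h5]
    have := dvd_add h3 h4
    simpa using this

/-- Main ring lemma: if `v^(p^(a+1)) = 1` then `p^β ∣ (v-1)^((β(p-1)+1) p^a)`. -/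
lemma main_ring (hp : p.Prime) (a β : ℕ) (v : R) (hv : v ^ p ^ (a + 1) = 1) :
    (p : R) ^ β ∣ (v - 1) ^ ((β * (p - 1) + 1) * p ^ a) := by
  have hu : (v ^ p ^ a) ^ p = 1 := by rw [← pow_mul, ← pow_succ]; exact hv
  obtain ⟨t, ht⟩ := freshman hp v a
  have h1 : (v - 1) ^ (p ^ a) = (v ^ p ^ a - 1) + (p : R) * t := by
    linear_combination ht
  have h2 : (v - 1) ^ ((β * (p - 1) + 1) * p ^ a) = ((v ^ p ^ a - 1) + (p : R) * t) ^ (β * (p - 1) + 1) := by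
    rw [mul_comm, pow_mul, h1]
  rw [h2, add_pow]
  apply Finset.dvd_sum
  intro k hk
  rw [mem_range] at hk
  set m := β * (p - 1) + 1 with hm
  by_cases hcase : β ≤ m - k
  · -- p^β divides (p t)^(m-k)
    have : (p : R) ^ β ∣ ((p : R) * t) ^ (m - k) := by
      rw [mul_pow]
      exact dvd_mul_of_dvd_left (pow_dvd_pow _ hcase) _
    exact Dvd.dvd.mul_right (dvd_mul_of_dvd_right this _) _
  · push_neg at hcase
    set i := m - k with hi
    have hk' : k ≤ m := Nat.lt_succ_iff.mp hk
    have hki : k = m - i := by omega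
    have hp2 : 2 ≤ p := hp.two_le
    -- k ≥ (β - i)(p-1) + 1
    have hkey : (β - i) * (p - 1) + 1 ≤ k := by
      have h1 : (β - i) * (p - 1) = β * (p - 1) - i * (p - 1) := by
        rw [Nat.sub_mul]
      have h2 : i ≤ i * (p - 1) := Nat.le_mul_of_pos_right i (by omega)
      have h3 : i * (p - 1) ≤ β * (p - 1) := Nat.mul_le_mul_right _ (by omega)
      omega
    obtain ⟨r, hr⟩ := Nat.le.dest hkey
    have hdvd1 : (p : R) ^ (β - i) ∣ (v ^ p ^ a - 1) ^ k := by
      rw [← hr, pow_add]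
      exact dvd_mul_of_dvd_left (pow_dvd_sub_one_pow hp _ hu (β - i)) _
    have hdvd2 : (p : R) ^ i ∣ ((p : R) * t) ^ i := by
      rw [mul_pow]; exact dvd_mul_right _ _
    have hsplit : (p : R) ^ β = (p : R) ^ (β - i) * (p : R) ^ i := by
      rw [← pow_add]; congr 1; omega
    rw [hsplit]
    exact Dvd.dvd.mul_right (mul_dvd_mul hdvd1 hdvd2) _

end RingLemmas

section Specialize

variable {q : ℕ}

/-- Iterated discrete derivative as multiplication in the group algebra. -/
lemma iter_eq_mul (f : ZMod q → ℤ) (F : AddMonoidAlgebra ℤ (ZMod q))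
    (hF : ∀ y, F.coeff y = f y) (n : ℕ) (x : ZMod q) :
    discDeriv^[n] f x
      = (((AddMonoidAlgebra.single (-1 : ZMod q) (1 : ℤ) - 1) ^ n) * F).coeff x := by
  induction n generalizing x with
  | zero => rw [pow_zero, one_mul, hF, Function.iterate_zero_apply]
  | succ n ih =>
    rw [Function.iterate_succ_apply']
    show discDeriv^[n] f (x + 1) - discDeriv^[n] f x = _
    rw [ih, ih, pow_succ', mul_assoc]
    set G := ((AddMonoidAlgebra.single (-1 : ZMod q) (1 : ℤ) - 1) ^ n) * F with hG
    rw [sub_mul, one_mul, AddMonoidAlgebra.coeff_sub, Finsupp.sub_apply, AddMonoidAlgebra.coeff_single_mul_apply]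
    rw [neg_neg, one_mul, add_comm]

end Specialize

theorem stmt_7 (p : ℕ) (hp : p.Prime) (α : ℕ) (hα : 1 ≤ α) (β : ℕ)
    (f : ZMod (p ^ α) → ℤ) :
    ∀ x : ZMod (p ^ α),
      (p : ℤ) ^ β ∣ discDeriv^[(β * (p - 1) + 1) * p ^ (α - 1)] f x := by
  intro x
  obtain ⟨a, rfl⟩ : ∃ a, α = a + 1 := ⟨α - 1, (Nat.succ_pred_eq_of_pos hα).symm⟩
  haveI : NeZero (p ^ (a + 1)) := ⟨pow_ne_zero _ hp.pos.ne'⟩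
  let F : AddMonoidAlgebra ℤ (ZMod (p ^ (a + 1))) := AddMonoidAlgebra.ofCoeff (Finsupp.equivFunOnFinite.symm f)
  have hF : ∀ y, F.coeff y = f y := fun y => rfl
  have hα1 : a + 1 - 1 = a := rfl
  rw [hα1, iter_eq_mul f F hF]
  have hX : (AddMonoidAlgebra.single (-1 : ZMod (p ^ (a + 1))) (1 : ℤ)) ^ (p ^ (a + 1)) = 1 := by
    rw [AddMonoidAlgebra.single_pow, one_pow, AddMonoidAlgebra.one_def]
    congr 1
    rw [nsmul_eq_mul]
    simp
  obtain ⟨e, he⟩ := main_ring hp a β _ hX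
  rw [he, mul_assoc]
  set G := e * F with hGdef
  have : ((p : AddMonoidAlgebra ℤ (ZMod (p ^ (a + 1)))) ^ β * G).coeff x = (p : ℤ) ^ β * G.coeff x := by
    rw [← Nat.cast_pow, ← nsmul_eq_mul, AddMonoidAlgebra.coeff_smul, Finsupp.smul_apply]
    push_cast
    ring
  rw [this]
  exact Dvd.intro _ rfl
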